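/- For any word w over {a,b}, the m-value of a·w·b equals the m-value of a·w̄·b, where w̄ is the reversal of w. -/
import Mathlib


def A : Matrix (Fin 2) (Fin 2) ℤ := !![1,1;1,2]
def B : Matrix (Fin 2) (Fin 2) ℤ := !![2,1;1,1]
/-- matrix of a word: `false` is the letter `a`, `true` is the letter `b` -/
def Mw (w : List Bool) : Matrix (Fin 2) (Fin 2) ℤ :=
  (w.map (fun x => if x then B else A)).prod
/-- the m-value: the top-right entry -/
def mval (w : List Bool) : ℤ := Mw w 0 1
def U : Matrix (Fin 2) (Fin 2) ℤ := !![0,-1;1,0]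
def J : Matrix (Fin 2) (Fin 2) ℤ := !![0,1;1,0]
/-- reversal with letters exchanged -/
def Ebar (w : List Bool) : List Bool := (w.map (fun x => !x)).reverse
def pell : ℕ → ℕ
  | 0 => 0
  | 1 => 1
  | n+2 => 2 * pell (n+1) + pell n

lemma Mw_append (u v : List Bool) : Mw (u ++ v) = Mw u * Mw v := by
  simp [Mw, List.map_append, List.prod_append]

lemma Mw_reverse (w : List Bool) : Mw w.reverse = (Mw w).transpose := by
  induction w with
  | nil => simp [Mw, Matrix.transpose_one]
  | cons x t ih =>
    have : Mw (x :: t) = (if x then B else A) * Mw t := by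
      simp [Mw]
    rw [List.reverse_cons, Mw_append, this, Matrix.transpose_mul, ih]
    congr 1
    have hx : ((if x then B else A) : Matrix (Fin 2) (Fin 2) ℤ).transpose = (if x then B else A) := by
      cases x <;> simp [A, B] <;> ext i j <;> fin_cases i <;> fin_cases j <;> rfl
    rw [hx]
    simp [Mw]

theorem stmt7 (w : List Bool) :
    mval ([false] ++ w ++ [true]) = mval ([false] ++ w.reverse ++ [true]) := by
  have h := Mw_reverse w
  simp only [mval, Mw_append, h]
  have h0 : Mw [false] = A := by simp [Mw]
  have h1 : Mw [true] = B := by simp [Mw]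
  rw [h0, h1]
  simp [A, B, Matrix.mul_apply, Matrix.vecMul, dotProduct, Fin.sum_univ_two, Matrix.transpose_apply]
  ring
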